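/- For a = 1 and β ≥ 0, the map F(T) = T / (1 + β‖T‖) on a finite-dimensional real inner product space is Lipschitz continuous with constant 1, i.e. ‖F(T₁) − F(T₂)‖ ≤ ‖T₁ − T₂‖. -/

import Mathlib

private lemma strain_aux (β n₁ n₂ p : ℝ) (hβ : 0 ≤ β) (hn₁0 : 0 ≤ n₁) (hn₂0 : 0 ≤ n₂)
    (hple : p ≤ n₁ * n₂) :
    ((1 + β * n₁)⁻¹)^2 * n₁^2 - 2 * ((1 + β * n₁)⁻¹ * (1 + β * n₂)⁻¹ * p)
      + ((1 + β * n₂)⁻¹)^2 * n₂^2 ≤ n₁^2 - 2 * p + n₂^2 := by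
  have hd₁ : (0:ℝ) < 1 + β * n₁ := by positivity
  have hd₂ : (0:ℝ) < 1 + β * n₂ := by positivity
  have ha₁0 : (0:ℝ) < (1 + β * n₁)⁻¹ := by positivity
  have ha₂0 : (0:ℝ) < (1 + β * n₂)⁻¹ := by positivity
  have ha₁1 : (1 + β * n₁)⁻¹ ≤ 1 := by
    apply inv_le_one_of_one_le₀; nlinarith [mul_nonneg hβ hn₁0]
  have ha₂1 : (1 + β * n₂)⁻¹ ≤ 1 := by
    apply inv_le_one_of_one_le₀; nlinarith [mul_nonneg hβ hn₂0]
  have key : ((1 + β * n₁)⁻¹ * n₁ - (1 + β * n₂)⁻¹ * n₂) * ((1 + β * n₁) * (1 + β * n₂))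
      = n₁ - n₂ := by
    field_simp
    ring
  have hprod : (1:ℝ) ≤ (1 + β * n₁) * (1 + β * n₂) := by
    nlinarith [mul_nonneg hβ hn₁0, mul_nonneg hβ hn₂0,
      mul_nonneg (mul_nonneg hβ hn₁0) (mul_nonneg hβ hn₂0)]
  have hD2 : (1:ℝ) ≤ ((1 + β * n₁) * (1 + β * n₂))^2 := by nlinarith [hprod]
  have keysq : ((1 + β * n₁)⁻¹ * n₁ - (1 + β * n₂)⁻¹ * n₂)^2 * ((1 + β * n₁) * (1 + β * n₂))^2
      = (n₁ - n₂)^2 := by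
    rw [← key]; ring
  have habs : ((1 + β * n₁)⁻¹ * n₁ - (1 + β * n₂)⁻¹ * n₂)^2 ≤ (n₁ - n₂)^2 := by
    nlinarith [keysq,
      mul_nonneg (sq_nonneg ((1 + β * n₁)⁻¹ * n₁ - (1 + β * n₂)⁻¹ * n₂)) (sub_nonneg.mpr hD2)]
  have h1 : (1 + β * n₁)⁻¹ * (1 + β * n₂)⁻¹ ≤ 1 := mul_le_one₀ ha₁1 ha₂0.le ha₂1
  nlinarith [habs, mul_nonneg (sub_nonneg.mpr h1) (sub_nonneg.mpr hple)]

theorem strain_limiting_lipschitz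
    {V : Type*} [NormedAddCommGroup V] [InnerProductSpace ℝ V] [FiniteDimensional ℝ V]
    (β : ℝ) (hβ : 0 ≤ β) (F : V → V) (hF : ∀ T, F T = (1 + β * ‖T‖)⁻¹ • T) :
    ∀ T₁ T₂ : V, ‖F T₁ - F T₂‖ ≤ ‖T₁ - T₂‖ := by
  intro T₁ T₂
  rw [hF, hF]
  have hd₁ : (0:ℝ) < 1 + β * ‖T₁‖ := by positivity
  have hd₂ : (0:ℝ) < 1 + β * ‖T₂‖ := by positivity
  have hple : (inner ℝ T₁ T₂ : ℝ) ≤ ‖T₁‖ * ‖T₂‖ := real_inner_le_norm T₁ T₂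
  have e1 : ‖(1 + β * ‖T₁‖)⁻¹ • T₁ - (1 + β * ‖T₂‖)⁻¹ • T₂‖ ^ 2
      = ((1 + β * ‖T₁‖)⁻¹)^2 * ‖T₁‖^2
        - 2 * ((1 + β * ‖T₁‖)⁻¹ * (1 + β * ‖T₂‖)⁻¹ * (inner ℝ T₁ T₂ : ℝ))
        + ((1 + β * ‖T₂‖)⁻¹)^2 * ‖T₂‖^2 := by
    rw [norm_sub_sq_real, real_inner_smul_left, real_inner_smul_right, norm_smul, norm_smul]
    simp only [Real.norm_eq_abs, abs_of_pos (inv_pos.mpr hd₁), abs_of_pos (inv_pos.mpr hd₂)]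
    ring
  have e2 : ‖T₁ - T₂‖ ^ 2 = ‖T₁‖^2 - 2 * (inner ℝ T₁ T₂ : ℝ) + ‖T₂‖^2 := norm_sub_sq_real T₁ T₂
  have sq_ineq : ‖(1 + β * ‖T₁‖)⁻¹ • T₁ - (1 + β * ‖T₂‖)⁻¹ • T₂‖ ^ 2 ≤ ‖T₁ - T₂‖ ^ 2 := by
    rw [e1, e2]
    exact strain_aux β ‖T₁‖ ‖T₂‖ _ hβ (norm_nonneg _) (norm_nonneg _) hple
  nlinarith [norm_nonneg ((1 + β * ‖T₁‖)⁻¹ • T₁ - (1 + β * ‖T₂‖)⁻¹ • T₂), norm_nonneg (T₁ - T₂),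
    sq_ineq]
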